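/- The strong product C_5 ⊠ C_5 of the 5-cycle with itself has vertex cover number at least 20; that is, every set of vertices of C_5 ⊠ C_5 containing at least one endpoint of every edge has cardinality at least 20. -/

import Mathlib

open SimpleGraph

/-- `S` is a monitoring edge-geodetic set (MEG-set) of `G`: for every edge `e` of `G`
there are `x, y ∈ S` whose distance in `G − e` differs from their distance in `G`
(including the case that they become disconnected in `G − e`). -/
def IsMEGSet {V : Type*} (G : SimpleGraph V) (S : Set V) : Prop :=
  ∀ e ∈ G.edgeSet, ∃ x ∈ S, ∃ y ∈ S,
    ¬ (G.deleteEdges {e}).Reachable x y ∨ (G.deleteEdges {e}).dist x y ≠ G.dist x y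

/-- The monitoring edge-geodetic number: the minimum cardinality of an MEG-set. -/
noncomputable def meg {V : Type*} [Fintype V] (G : SimpleGraph V) : ℕ :=
  sInf {n | ∃ S : Set V, IsMEGSet G S ∧ S.ncard = n}

/-- The strong product `G ⊠ H` of two simple graphs: `(a,b)` adjacent to `(c,d)` iff
`a = c` and `bd ∈ E(H)`, or `b = d` and `ac ∈ E(G)`, or `ac ∈ E(G)` and `bd ∈ E(H)`. -/
def strongProd {α β : Type*} (G : SimpleGraph α) (H : SimpleGraph β) :
    SimpleGraph (α × β) where
  Adj x y := (x.1 = y.1 ∧ H.Adj x.2 y.2) ∨ (x.2 = y.2 ∧ G.Adj x.1 y.1) ∨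
    (G.Adj x.1 y.1 ∧ H.Adj x.2 y.2)
  symm := ⟨fun x y => by
    rintro (⟨h1, h2⟩ | ⟨h1, h2⟩ | ⟨h1, h2⟩)
    · exact Or.inl ⟨h1.symm, h2.symm⟩
    · exact Or.inr (Or.inl ⟨h1.symm, h2.symm⟩)
    · exact Or.inr (Or.inr ⟨h1.symm, h2.symm⟩)⟩
  loopless := ⟨fun x => by
    rintro (⟨_, h⟩ | ⟨_, h⟩ | ⟨h, _⟩)
    · exact H.loopless.irrefl _ h
    · exact G.loopless.irrefl _ h
    · exact G.loopless.irrefl _ h⟩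

infixl:70 " ⊠ " => strongProd

/-- A vertex cover: a set of vertices containing at least one endpoint of every edge. -/
def IsVertexCover {V : Type*} (G : SimpleGraph V) (C : Set V) : Prop :=
  ∀ e ∈ G.edgeSet, ∃ v ∈ C, v ∈ e


lemma C5_indep_card (s : Finset (Fin 5))
    (h : ∀ x ∈ s, ∀ y ∈ s, x ≠ y → ¬(cycleGraph 5).Adj x y) : s.card ≤ 2 := by
  revert s h; decide

lemma two_cols (b : Fin 5) :
    (Finset.univ.filter (fun a : Fin 5 => b = a ∨ b = a + 1)).card = 2 := by
  revert b; decide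

lemma C5_adj_succ (a : Fin 5) : (cycleGraph 5).Adj a (a + 1) := by revert a; decide


theorem vertexCover_C5_strong_C5 :
    ∀ C : Set (Fin 5 × Fin 5),
      _root_.IsVertexCover (cycleGraph 5 ⊠ cycleGraph 5) C → 20 ≤ C.ncard := by
  classical
  intro C hC
  set I : Finset (Fin 5 × Fin 5) := Finset.univ.filter (fun v => v ∉ C) with hIdef
  have hIindep : ∀ u ∈ I, ∀ v ∈ I, ¬ (cycleGraph 5 ⊠ cycleGraph 5).Adj u v := by
    intro u hu v hv hadj
    obtain ⟨w, hwC, hw⟩ := hC s(u, v) ((cycleGraph 5 ⊠ cycleGraph 5).mem_edgeSet.2 hadj)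
    rw [Sym2.mem_iff] at hw
    simp only [hIdef, Finset.mem_filter] at hu hv
    rcases hw with rfl | rfl
    · exact hu.2 hwC
    · exact hv.2 hwC
  -- for each a, vertices of I in columns a, a+1
  set T : Fin 5 → Finset (Fin 5 × Fin 5) :=
    fun a => I.filter (fun v => v.1 = a ∨ v.1 = a + 1) with hTdef
  have hT2 : ∀ a, (T a).card ≤ 2 := by
    intro a
    have hinj : Set.InjOn Prod.snd ((T a : Finset (Fin 5 × Fin 5)) : Set (Fin 5 × Fin 5)) := by
      intro u hu v hv h2
      simp only [hTdef, Finset.coe_filter, Set.mem_setOf_eq] at hu hv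
      by_contra hne
      have h1 : u.1 ≠ v.1 := fun h => hne (Prod.ext h h2)
      have hadj1 : (cycleGraph 5).Adj u.1 v.1 := by
        rcases hu.2 with h | h <;> rcases hv.2 with h' | h' <;>
          first
          | (exact absurd (h.trans h'.symm) h1)
          | (rw [h, h']; exact C5_adj_succ a)
          | (rw [h, h']; exact (C5_adj_succ a).symm)
      exact hIindep u hu.1 v hv.1 (Or.inr (Or.inl ⟨h2, hadj1⟩))
    have hcard : (T a).card = ((T a).image Prod.snd).card :=
      (Finset.card_image_of_injOn hinj).symm
    rw [hcard]
    apply C5_indep_card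
    intro x hx y hy hxy hadj
    obtain ⟨u, hu, rfl⟩ := Finset.mem_image.1 hx
    obtain ⟨v, hv, rfl⟩ := Finset.mem_image.1 hy
    simp only [hTdef, Finset.mem_filter] at hu hv
    have : (cycleGraph 5 ⊠ cycleGraph 5).Adj u v := by
      rcases eq_or_ne u.1 v.1 with h | h
      · exact Or.inl ⟨h, hadj⟩
      · have hadj1 : (cycleGraph 5).Adj u.1 v.1 := by
          rcases hu.2 with h1 | h1 <;> rcases hv.2 with h2 | h2 <;>
            first
            | (exact absurd (h1.trans h2.symm) h)
            | (rw [h1, h2]; exact C5_adj_succ a)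
            | (rw [h1, h2]; exact (C5_adj_succ a).symm)
        exact Or.inr (Or.inr ⟨hadj1, hadj⟩)
    exact hIindep u hu.1 v hv.1 this
  -- double counting
  have hsum : ∑ a : Fin 5, (T a).card = 2 * I.card := by
    simp only [hTdef, Finset.card_filter]
    rw [Finset.sum_comm]
    rw [Finset.sum_congr rfl (fun v _ => ?_), Finset.sum_const, smul_eq_mul, mul_comm]
    calc (∑ a : Fin 5, if v.1 = a ∨ v.1 = a + 1 then 1 else 0)
        = (Finset.univ.filter (fun a : Fin 5 => v.1 = a ∨ v.1 = a + 1)).card := by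
          rw [Finset.card_filter]
      _ = 2 := two_cols v.1
  have hI5 : I.card ≤ 5 := by
    have h10 : 2 * I.card ≤ 10 := by
      rw [← hsum]
      calc ∑ a : Fin 5, (T a).card ≤ ∑ _a : Fin 5, 2 :=
            Finset.sum_le_sum (fun a _ => hT2 a)
        _ = 10 := by simp
    omega
  -- conclude
  have hCfin : C.Finite := Set.toFinite C
  have hsplit : hCfin.toFinset.card + I.card = 25 := by
    rw [hIdef]
    have : I = Finset.univ \ hCfin.toFinset := by
      ext v; simp [hIdef, Set.mem_setOf_eq]
    rw [← hIdef, this, Finset.card_sdiff_of_subset (Finset.subset_univ _)]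
    have : hCfin.toFinset.card ≤ 25 := by
      calc hCfin.toFinset.card ≤ (Finset.univ : Finset (Fin 5 × Fin 5)).card :=
        Finset.card_le_card (Finset.subset_univ _)
        _ = 25 := by simp
    simp only [Finset.card_univ, Fintype.card_prod, Fintype.card_fin]
    omega
  have : C.ncard = hCfin.toFinset.card := Set.ncard_eq_toFinset_card C hCfin
  omega
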